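/- arXiv:2402.13755 — 6 statements merged into one kernel-verified Lean document; each statement's English description precedes it below -/
import Mathlib

section
/- For any ε > 0, a graph G = (V,E) with arboricity α has at least ε|V|/(2+ε) vertices of degree at most (2+ε)·α. -/
open Classical

variable {V : Type*}

/-- `G` has arboricity at most `a`: every subgraph `H` with at least `2` vertices
satisfies `⌈|E(H)|/(|V(H)|-1)⌉ ≤ a`, i.e. `|E(H)| ≤ a * (|V(H)| - 1)`. -/
def HasArboricity (G : SimpleGraph V) (a : ℕ) : Prop :=
  ∀ H : G.Subgraph, 2 ≤ H.verts.ncard → H.edgeSet.ncard ≤ a * (H.verts.ncard - 1)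

/-- Vertices assigned a layer `≤ i` in the iterative construction of the
`S`-induced `β`-partition. -/
noncomputable def assignedUpTo (G : SimpleGraph V) (S : Set V) (β : ℕ) : ℕ → Set V
  | 0 => {v | v ∈ S ∧ (G.neighborSet v).ncard ≤ β}
  | (i+1) => assignedUpTo G S β i ∪
      {v | v ∈ S ∧ ((G.neighborSet v) \ assignedUpTo G S β i).ncard ≤ β}

/-- The `S`-induced `β`-partition `σ_{S,β} : V → ℕ∞`. -/
noncomputable def indSigma (G : SimpleGraph V) (S : Set V) (β : ℕ) (v : V) : ℕ∞ :=
  if _h : ∃ i, v ∈ assignedUpTo G S β i then (sInf {i | v ∈ assignedUpTo G S β i} : ℕ) else ⊤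

/-- Auxiliary definition of the dependency graph, by fuel on the layer. -/
noncomputable def depAux (G : SimpleGraph V) (σ : V → ℕ∞) : ℕ → V → Set V
  | 0, v => if σ v = 0 then {v} else ∅
  | (n+1), v => if σ v = ((n+1 : ℕ) : ℕ∞)
      then insert v (⋃ w ∈ {w | G.Adj v w ∧ σ w < σ v}, depAux G σ n w)
      else depAux G σ n v

/-- The dependency graph `D(σ, v)`. -/
noncomputable def depGraph (G : SimpleGraph V) (σ : V → ℕ∞) (v : V) : Set V :=
  depAux G σ (σ v).toNat v

/-- A partial `β`-partition: every node with finite layer has at most `β`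
neighbors in equal or higher layers. -/
def IsPartialBetaPartition (G : SimpleGraph V) (β : ℕ) (lam : V → ℕ∞) : Prop :=
  ∀ v, lam v ≠ ⊤ → {w | G.Adj v w ∧ lam v ≤ lam w}.ncard ≤ β

/-- For any `ε > 0`, a graph with arboricity `α` has at least
`ε|V|/(2+ε)` vertices of degree at most `(2+ε)·α`. -/
theorem many_low_degree_vertices [Fintype V] (G : SimpleGraph V) (a : ℕ)
    (ε : ℝ) (hε : 0 < ε) (hG : HasArboricity G a) :
    ε * (Fintype.card V) / (2 + ε)
      ≤ ({v : V | ((G.neighborSet v).ncard : ℝ) ≤ (2 + ε) * a}.ncard : ℝ) := by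
  classical
  set n := Fintype.card V with hn
  have h2ε : (0:ℝ) < 2 + ε := by linarith
  -- degree = ncard of neighborSet
  have hdeg : ∀ v : V, (G.neighborSet v).ncard = G.degree v := by
    intro v
    rw [Set.ncard_eq_toFinset_card']
    simp [SimpleGraph.degree, SimpleGraph.neighborFinset]
  -- sum of degrees bound
  have hsum : (∑ v : V, (G.degree v : ℝ)) ≤ 2 * a * n := by
    have hs : ∑ v : V, G.degree v = 2 * G.edgeFinset.card :=
      SimpleGraph.sum_degrees_eq_twice_card_edges G
    by_cases hn2 : 2 ≤ n
    · have hE : G.edgeFinset.card ≤ a * (n - 1) := by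
        have := hG ⊤ (by simpa [Set.ncard_univ] using hn2)
        simpa [Set.ncard_univ, SimpleGraph.Subgraph.edgeSet_top,
          Set.ncard_eq_toFinset_card', SimpleGraph.edgeFinset] using this
      have : ∑ v : V, G.degree v ≤ 2 * (a * n) := by
        rw [hs]
        have : a * (n - 1) ≤ a * n := Nat.mul_le_mul_left _ (Nat.sub_le _ _)
        omega
      calc (∑ v : V, (G.degree v : ℝ)) = ((∑ v : V, G.degree v : ℕ) : ℝ) := by
            push_cast; ring_nf
        _ ≤ ((2 * (a * n) : ℕ) : ℝ) := by exact_mod_cast this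
        _ = 2 * a * n := by push_cast; ring
    · have hd0 : ∀ v : V, G.degree v = 0 := by
        intro v
        have := G.degree_lt_card_verts v
        omega
      simp [hd0]
      positivity
  -- the "bad" set
  set A : Finset V := Finset.univ.filter
    (fun v => ¬ ((G.neighborSet v).ncard : ℝ) ≤ (2 + ε) * a) with hA
  set T : Finset V := Finset.univ.filter
    (fun v => ((G.neighborSet v).ncard : ℝ) ≤ (2 + ε) * a) with hT
  have hTA : T.card + A.card = n := by
    simpa [hT, hA] using Finset.card_filter_add_card_filter_not
      (s := Finset.univ) (p := fun v => ((G.neighborSet v).ncard : ℝ) ≤ (2 + ε) * a)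
  have hTcard : ({v : V | ((G.neighborSet v).ncard : ℝ) ≤ (2 + ε) * a}.ncard : ℝ)
      = (T.card : ℝ) := by
    congr 1
    rw [Set.ncard_eq_toFinset_card']
    congr 1
    ext v
    simp [hT]
  rw [hTcard]
  -- lower bound sum over A
  have hAsum : (A.card : ℝ) * ((2 + ε) * a) ≤ ∑ v : V, (G.degree v : ℝ) := by
    have h1 : (A.card : ℝ) * ((2 + ε) * a) ≤ ∑ v ∈ A, (G.degree v : ℝ) := by
      rw [Finset.card_eq_sum_ones A]
      push_cast
      rw [Finset.sum_mul]
      apply Finset.sum_le_sum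
      intro v hv
      rw [hA, Finset.mem_filter] at hv
      have := hv.2
      rw [hdeg v] at this
      push_neg at this
      linarith
    have h2 : ∑ v ∈ A, (G.degree v : ℝ) ≤ ∑ v : V, (G.degree v : ℝ) :=
      Finset.sum_le_sum_of_subset_of_nonneg (Finset.subset_univ A)
        (fun v _ _ => by positivity)
    linarith
  rw [div_le_iff₀ h2ε]
  by_cases ha : a = 0
  · -- all degrees are 0, so T = univ
    subst ha
    have hd0 : ∀ v : V, (G.degree v : ℝ) = 0 := by
      intro v
      have hnn : ∀ v ∈ Finset.univ, (0:ℝ) ≤ (G.degree v : ℝ) := fun v _ => by positivity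
      have := (Finset.sum_eq_zero_iff_of_nonneg hnn).1
        (le_antisymm (by simpa using hsum) (Finset.sum_nonneg hnn)) v (Finset.mem_univ v)
      exact this
    have hTuniv : T = Finset.univ := by
      rw [hT]
      apply Finset.filter_true_of_mem
      intro v _
      rw [hdeg v]
      have := hd0 v
      push_cast
      simp at this ⊢
      omega
    rw [hTuniv]
    simp only [Finset.card_univ]
    nlinarith [Nat.cast_nonneg (α := ℝ) n]
  · have hapos : (0:ℝ) < a := by
      have : 1 ≤ a := Nat.one_le_iff_ne_zero.2 ha
      exact_mod_cast Nat.lt_of_lt_of_le Nat.zero_lt_one this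
    have key : (A.card : ℝ) * (2 + ε) ≤ 2 * n := by
      have h3 : (A.card : ℝ) * ((2 + ε) * a) ≤ 2 * a * n := le_trans hAsum hsum
      nlinarith
    have hn' : (T.card : ℝ) + (A.card : ℝ) = n := by exact_mod_cast hTA
    nlinarith
end

section
/- Let σ = σ_{S,β} be the S-induced β-partition of a graph G. For every node v ∈ S with σ(v) ≠ ∞ and deg_G(v) ≥ β+1, there are at least β+1 neighbors w of v with σ(w) ≥ σ(v) − 1. -/
open Classical

variable {V : Type*}

lemma assignedUpTo_mono (G : SimpleGraph V) (S : Set V) (β : ℕ) :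
    Monotone (assignedUpTo G S β) := by
  apply monotone_nat_of_le_succ
  intro n
  exact Set.subset_union_left

lemma indSigma_le_iff (G : SimpleGraph V) (S : Set V) (β : ℕ) (w : V) (n : ℕ) :
    indSigma G S β w ≤ (n : ℕ∞) ↔ w ∈ assignedUpTo G S β n := by
  unfold indSigma
  split
  · rename_i hex
    rw [Nat.cast_le]
    constructor
    · intro hle
      have hmem : sInf {i | w ∈ assignedUpTo G S β i} ∈ {i | w ∈ assignedUpTo G S β i} :=
        Nat.sInf_mem hex
      exact assignedUpTo_mono G S β hle hmem
    · intro hmem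
      exact Nat.sInf_le hmem
  · rename_i hex
    simp only [top_le_iff]
    constructor
    · intro h; exact absurd h (by simp)
    · intro hmem; exact absurd ⟨n, hmem⟩ hex

/-- If `σ_{S,β}(v) ≠ ∞` for `v ∈ S` and `deg(v) ≥ β+1`, then at least
`β+1` neighbors `w` of `v` satisfy `σ_{S,β}(w) ≥ σ_{S,β}(v) - 1`. -/
theorem indSigma_many_nearly_higher_neighbors (G : SimpleGraph V) (S : Set V) (β : ℕ)
    (hβ : 1 ≤ β) (v : V) (hv : v ∈ S) (h : indSigma G S β v ≠ ⊤)
    (hdeg : β + 1 ≤ (G.neighborSet v).ncard) :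
    β + 1 ≤ {w | G.Adj v w ∧ indSigma G S β v ≤ indSigma G S β w + 1}.ncard := by
  have hfin : (G.neighborSet v).Finite := by
    by_contra hinf
    rw [Set.Infinite.ncard (by simpa using hinf)] at hdeg
    omega
  obtain ⟨i, hi⟩ : ∃ i : ℕ, indSigma G S β v = (i : ℕ∞) := by
    lift indSigma G S β v to ℕ using h with i
    exact ⟨i, rfl⟩
  match i with
  | 0 =>
    exfalso
    have hmem : v ∈ assignedUpTo G S β 0 := by
      rw [← indSigma_le_iff]; rw [hi]
    have := hmem.2
    omega
  | 1 =>
    have hset : {w | G.Adj v w ∧ indSigma G S β v ≤ indSigma G S β w + 1} =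
        G.neighborSet v := by
      ext w
      simp only [Set.mem_setOf_eq, SimpleGraph.mem_neighborSet, hi]
      constructor
      · exact fun ⟨ha, _⟩ => ha
      · intro ha
        exact ⟨ha, by exact_mod_cast le_add_self⟩
    rw [hset]; exact hdeg
  | (k+2) =>
    have hnot : v ∉ assignedUpTo G S β (k+1) := by
      rw [← indSigma_le_iff, hi]
      intro hle
      rw [Nat.cast_le] at hle
      omega
    have hcard : β + 1 ≤ ((G.neighborSet v) \ assignedUpTo G S β k).ncard := by
      by_contra hc
      exact hnot (Or.inr ⟨hv, by omega⟩)
    refine le_trans hcard (Set.ncard_le_ncard ?_ (hfin.subset (by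
      intro w hw; exact hw.1)))
    intro w hw
    obtain ⟨hadj, hnmem⟩ := hw
    refine ⟨hadj, ?_⟩
    rw [← indSigma_le_iff] at hnmem
    push_neg at hnmem
    rw [hi]
    have hk1 : ((k : ℕ∞) + 1) ≤ indSigma G S β w :=
      (ENat.add_one_le_iff (by simp)).mpr hnmem
    calc ((k + 2 : ℕ) : ℕ∞) = ((k : ℕ∞) + 1) + 1 := by push_cast; ring
    _ ≤ indSigma G S β w + 1 := add_le_add hk1 (le_refl 1)
end

section
/- Monotonicity of induced β-partitions: for subsets S ⊆ T ⊆ V of a graph G and any β ≥ 1, σ_{S,β}(v) ≥ σ_{T,β}(v) for every node v ∈ V (with the convention ∞ ≥ k for all k ∈ ℕ). -/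
open Classical

variable {V : Type*}

lemma assignedUpTo_mono_index (G : SimpleGraph V) (S : Set V) (β : ℕ) :
    ∀ {i j : ℕ}, i ≤ j → assignedUpTo G S β i ⊆ assignedUpTo G S β j := by
  intro i j hij
  induction j with
  | zero => simpa [Nat.le_zero.mp hij]
  | succ n ih =>
    rcases Nat.lt_or_ge i (n+1) with h | h
    · exact (ih (Nat.lt_succ_iff.mp h)).trans Set.subset_union_left
    · have : i = n + 1 := le_antisymm hij h
      simp [this]

lemma assignedUpTo_mono_set (G : SimpleGraph V) (S T : Set V) (β : ℕ) (hST : S ⊆ T) :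
    ∀ i, assignedUpTo G S β i ⊆ assignedUpTo G T β i := by
  intro i
  induction i with
  | zero =>
    intro v hv
    exact ⟨hST hv.1, hv.2⟩
  | succ n ih =>
    intro v hv
    rcases hv with hv | hv
    · exact Or.inl (ih hv)
    · obtain ⟨hvS, hcard⟩ := hv
      by_cases hfin : (G.neighborSet v).Finite
      · refine Or.inr ⟨hST hvS, ?_⟩
        refine le_trans (Set.ncard_le_ncard ?_ hfin.diff) hcard
        exact Set.diff_subset_diff_right ih
      · -- infinite neighborhood: v was already assigned at step 0
        have h0 : v ∈ assignedUpTo G T β 0 := by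
          refine ⟨hST hvS, ?_⟩
          rw [Set.Infinite.ncard (by simpa using hfin)]
          exact Nat.zero_le β
        exact Or.inl (assignedUpTo_mono_index G T β (Nat.zero_le n) h0)

/-- Monotonicity of induced `β`-partitions: for `S ⊆ T ⊆ V`,
`σ_{S,β}(v) ≥ σ_{T,β}(v)` for every node `v`. -/
theorem indSigma_antitone (G : SimpleGraph V) (S T : Set V) (β : ℕ)
    (hβ : 1 ≤ β) (hST : S ⊆ T) :
    ∀ v : V, indSigma G T β v ≤ indSigma G S β v := by
  intro v
  unfold indSigma
  by_cases hS : ∃ i, v ∈ assignedUpTo G S β i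
  · obtain ⟨i, hi⟩ := hS
    have hS : ∃ i, v ∈ assignedUpTo G S β i := ⟨i, hi⟩
    have hT : ∃ i, v ∈ assignedUpTo G T β i :=
      ⟨i, assignedUpTo_mono_set G S T β hST i hi⟩
    rw [dif_pos hT, dif_pos hS]
    have : sInf {i | v ∈ assignedUpTo G T β i} ≤ sInf {i | v ∈ assignedUpTo G S β i} := by
      apply csInf_le_csInf (OrderBot.bddBelow _) ⟨i, hi⟩
      intro j hj
      exact assignedUpTo_mono_set G S T β hST j hj
    exact_mod_cast this
  · rw [dif_neg hS]; exact le_top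
end

section
/- For any subset S ⊆ V of a graph G and any β ≥ 1, σ_{S,β}(v) ≥ ℓ_β(v) for every v ∈ V, where ℓ_β = σ_{V,β} is the natural β-partition. -/
open Classical

variable {V : Type*}

lemma assignedUpTo_subset_univ (G : SimpleGraph V) (S : Set V) (β : ℕ) :
    ∀ i, assignedUpTo G S β i ⊆ assignedUpTo G Set.univ β i := by
  intro i
  induction i with
  | zero => exact fun v hv => ⟨Set.mem_univ v, hv.2⟩
  | succ i ih =>
    intro v hv
    rcases hv with hv | hv
    · exact Or.inl (ih hv)
    · by_cases hfin : (G.neighborSet v).Finite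
      · refine Or.inr ⟨Set.mem_univ v, ?_⟩
        exact le_trans (Set.ncard_le_ncard (Set.diff_subset_diff_right ih)
          (hfin.subset Set.diff_subset)) hv.2
      · refine Or.inl (assignedUpTo_mono G Set.univ β (Nat.zero_le i) ?_)
        exact ⟨Set.mem_univ v, by
          rw [Set.Infinite.ncard hfin]; exact Nat.zero_le β⟩

/-- For any `S ⊆ V`, `σ_{S,β}(v) ≥ ℓ_β(v)` for every `v`, where
`ℓ_β = σ_{V,β}` is the natural `β`-partition. -/
theorem natural_partition_le_indSigma (G : SimpleGraph V) (S : Set V) (β : ℕ)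
    (hβ : 1 ≤ β) :
    ∀ v : V, indSigma G Set.univ β v ≤ indSigma G S β v := by
  intro v
  unfold indSigma
  by_cases hS : ∃ i, v ∈ assignedUpTo G S β i
  · obtain ⟨i, hi⟩ := hS
    have hU : ∃ i, v ∈ assignedUpTo G Set.univ β i :=
      ⟨i, assignedUpTo_subset_univ G S β i hi⟩
    rw [dif_pos hU, dif_pos ⟨i, hi⟩]
    have hmem : sInf {i | v ∈ assignedUpTo G S β i} ∈ {i | v ∈ assignedUpTo G S β i} :=
      Nat.sInf_mem ⟨i, hi⟩
    have : sInf {i | v ∈ assignedUpTo G Set.univ β i} ≤ sInf {i | v ∈ assignedUpTo G S β i} :=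
      Nat.sInf_le (assignedUpTo_subset_univ G S β _ hmem)
    exact_mod_cast this
  · rw [dif_neg hS]; exact le_top
end

section
/- Let G be a graph, S ⊆ V, β ≥ 1, and ℓ = ℓ_β = σ_{V,β} the natural β-partition. If the dependency graph of a node v satisfies D(ℓ, v) ⊆ S, then σ_{S,β}(w) = ℓ(w) for every w ∈ D(ℓ, v). -/
open Classical

variable {V : Type*}

lemma mem_assignedUpTo_iff (G : SimpleGraph V) (S : Set V) (β : ℕ) (w : V) (i : ℕ) :
    w ∈ assignedUpTo G S β i ↔ indSigma G S β w ≤ (i : ℕ∞) := by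
  unfold indSigma
  split_ifs with h
  · rw [Nat.cast_le]
    constructor
    · intro hw; exact Nat.sInf_le hw
    · intro hle
      have := Nat.sInf_mem h
      exact assignedUpTo_mono G S β hle this
  · simp only [top_le_iff]
    constructor
    · intro hw; exact absurd ⟨i, hw⟩ h
    · intro ht; simp at ht

lemma mem_assigned_univ_of_infinite (G : SimpleGraph V) (β : ℕ) (u : V)
    (hinf : (G.neighborSet u).Infinite) : u ∈ assignedUpTo G Set.univ β 0 := by
  simp [assignedUpTo, hinf.ncard]

lemma indSigma_univ_le (G : SimpleGraph V) (S : Set V) (β : ℕ) (w : V) :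
    indSigma G Set.univ β w ≤ indSigma G S β w := by
  by_cases h : indSigma G S β w = ⊤
  · rw [h]; exact le_top
  · lift indSigma G S β w to ℕ using h with i hi
    rw [← mem_assignedUpTo_iff]
    exact assignedUpTo_subset_univ G S β i ((mem_assignedUpTo_iff G S β w i).mpr hi.ge)

lemma neighborSet_finite_of_ne_zero (G : SimpleGraph V) (β : ℕ) (u : V)
    (h : indSigma G Set.univ β u ≠ 0) : (G.neighborSet u).Finite := by
  by_contra hinf
  have := mem_assigned_univ_of_infinite G β u hinf
  rw [mem_assignedUpTo_iff] at this
  exact h (le_antisymm (by exact_mod_cast this) zero_le)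

lemma depAux_self (G : SimpleGraph V) (σ : V → ℕ∞) :
    ∀ (n : ℕ) (v : V), σ v ≤ (n : ℕ∞) → v ∈ depAux G σ n v := by
  intro n
  induction n with
  | zero =>
    intro v hv
    have : σ v = 0 := le_antisymm hv zero_le
    simp [depAux, this]
  | succ n ih =>
    intro v hv
    by_cases hc : σ v = ((n+1 : ℕ) : ℕ∞)
    · simp [depAux, hc]
    · have hle : σ v ≤ (n : ℕ∞) := by
        cases hσ : σ v with
        | top => rw [hσ, top_le_iff] at hv; exact absurd hv (ENat.coe_ne_top (n+1))
        | coe k =>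
          rw [hσ] at hv hc
          have hk : k ≤ n + 1 := by exact_mod_cast hv
          have hk2 : k ≠ n + 1 := fun hh => hc (by exact_mod_cast hh)
          exact_mod_cast Nat.lt_succ_iff.mp (lt_of_le_of_ne hk hk2)
      simp only [depAux, if_neg hc]
      exact ih v hle

lemma depAux_closed (G : SimpleGraph V) (σ : V → ℕ∞) :
    ∀ (n : ℕ) (v w : V), w ∈ depAux G σ n v →
      σ w ≤ (n : ℕ∞) ∧ ∀ u, G.Adj w u → σ u < σ w → u ∈ depAux G σ n v := by
  intro n
  induction n with
  | zero =>
    intro v w hw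
    by_cases h0 : σ v = 0
    · simp only [depAux, if_pos h0, Set.mem_singleton_iff] at hw
      subst hw
      refine ⟨by rw [h0]; exact le_refl _, ?_⟩
      intro u _ hu
      rw [h0] at hu
      exact absurd hu (by simp)
    · simp [depAux, if_neg h0] at hw
  | succ n ih =>
    intro v w hw
    by_cases hc : σ v = ((n+1 : ℕ) : ℕ∞)
    · simp only [depAux, if_pos hc] at hw ⊢
      rcases hw with hw | hw
      · subst hw
        refine ⟨by rw [hc], ?_⟩
        intro u hadj hu
        have hu' : σ u ≤ (n : ℕ∞) := by
          rw [hc] at hu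
          cases hσ : σ u with
          | top => rw [hσ] at hu; exact absurd hu (by simp)
          | coe k =>
            rw [hσ] at hu
            have : k < n + 1 := by exact_mod_cast hu
            exact_mod_cast Nat.lt_succ_iff.mp this
        refine Set.mem_insert_iff.mpr (Or.inr ?_)
        refine Set.mem_biUnion ?_ (depAux_self G σ n u hu')
        exact ⟨hadj, by rw [hc]; exact lt_of_le_of_lt hu' (by exact_mod_cast Nat.lt_succ_self n)⟩
      · rw [Set.mem_iUnion₂] at hw
        obtain ⟨w', hw', hmem⟩ := hw
        obtain ⟨hle, hcl⟩ := ih w' w hmem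
        refine ⟨hle.trans (by exact_mod_cast Nat.le_succ n), ?_⟩
        intro u hadj hu
        exact Set.mem_insert_iff.mpr (Or.inr (Set.mem_biUnion hw' (hcl u hadj hu)))
    · simp only [depAux, if_neg hc] at hw ⊢
      obtain ⟨hle, hcl⟩ := ih v w hw
      exact ⟨hle.trans (by exact_mod_cast Nat.le_succ n), hcl⟩

lemma depGraph_closed (G : SimpleGraph V) (σ : V → ℕ∞) (v w : V)
    (hw : w ∈ depGraph G σ v) :
    σ w ≠ ⊤ ∧ ∀ u, G.Adj w u → σ u < σ w → u ∈ depGraph G σ v := by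
  obtain ⟨hle, hcl⟩ := depAux_closed G σ ((σ v).toNat) v w hw
  exact ⟨(hle.trans_lt (by exact_mod_cast lt_top_iff_ne_top.mpr (ENat.coe_ne_top _))).ne, hcl⟩

/-- If the dependency graph of `v` (w.r.t. the natural `β`-partition
`ℓ = σ_{V,β}`) satisfies `D(ℓ, v) ⊆ S`, then `σ_{S,β}(w) = ℓ(w)` for every
`w ∈ D(ℓ, v)`. -/
theorem indSigma_eq_natural_on_depGraph (G : SimpleGraph V) (S : Set V) (β : ℕ)
    (hβ : 1 ≤ β) (v : V)
    (h : depGraph G (indSigma G Set.univ β) v ⊆ S) :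
    ∀ w ∈ depGraph G (indSigma G Set.univ β) v,
      indSigma G S β w = indSigma G Set.univ β w := by
  have key : ∀ (n : ℕ), ∀ w ∈ depGraph G (indSigma G Set.univ β) v,
      indSigma G Set.univ β w = (n : ℕ∞) → indSigma G S β w ≤ (n : ℕ∞) := by
    intro n
    induction n using Nat.strong_induction_on with
    | _ n ihn =>
      intro w hw hn
      rw [← mem_assignedUpTo_iff]
      have hwS : w ∈ S := h hw
      match n, hn with
      | 0, hn =>
        have hw0 : w ∈ assignedUpTo G Set.univ β 0 := by
          rw [mem_assignedUpTo_iff, hn]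
        exact ⟨hwS, hw0.2⟩
      | (j+1), hn =>
        have hwA : w ∈ assignedUpTo G Set.univ β (j+1) := by
          rw [mem_assignedUpTo_iff, hn]
        have hwnA : w ∉ assignedUpTo G Set.univ β j := by
          rw [mem_assignedUpTo_iff, hn]
          intro hle
          have : (j : ℕ) + 1 ≤ j := by exact_mod_cast hle
          omega
        have hcard : ((G.neighborSet w) \ assignedUpTo G Set.univ β j).ncard ≤ β := by
          rcases hwA with h1 | h1
          · exact absurd h1 hwnA
          · exact h1.2
        have hfin : (G.neighborSet w).Finite := by
          refine neighborSet_finite_of_ne_zero G β w ?_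
          rw [hn]
          intro h0
          have : (j : ℕ) + 1 = 0 := by exact_mod_cast h0
          omega
        have hsub : (G.neighborSet w) \ assignedUpTo G S β j ⊆
            (G.neighborSet w) \ assignedUpTo G Set.univ β j := by
          intro u hu
          refine ⟨hu.1, fun hA => hu.2 ?_⟩
          have hℓu : indSigma G Set.univ β u ≤ (j : ℕ∞) :=
            (mem_assignedUpTo_iff G Set.univ β u j).mp hA
          have hadj : G.Adj w u := hu.1
          have hlt : indSigma G Set.univ β u < indSigma G Set.univ β w := by
            rw [hn]
            refine lt_of_le_of_lt hℓu ?_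
            exact_mod_cast Nat.lt_succ_self j
          have huD : u ∈ depGraph G (indSigma G Set.univ β) v :=
            (depGraph_closed G (indSigma G Set.univ β) v w hw).2 u hadj hlt
          cases hσ : indSigma G Set.univ β u with
          | top => rw [hσ] at hℓu; exact absurd (top_le_iff.mp hℓu) (ENat.coe_ne_top j)
          | coe m =>
            have hm : m ≤ j := by rw [hσ] at hℓu; exact_mod_cast hℓu
            have hS : indSigma G S β u ≤ (m : ℕ∞) :=
              ihn m (by omega) u huD hσ
            refine (mem_assignedUpTo_iff G S β u j).mpr (hS.trans ?_)
            exact_mod_cast hm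
        refine Or.inr ⟨hwS, le_trans (Set.ncard_le_ncard hsub hfin.diff) hcard⟩
  intro w hw
  refine le_antisymm ?_ (indSigma_univ_le G S β w)
  obtain ⟨hne, -⟩ := depGraph_closed G (indSigma G Set.univ β) v w hw
  cases hσ : indSigma G Set.univ β w with
  | top => exact absurd hσ hne
  | coe n => exact key n w hw hσ
end

section
/- Let G have arboricity α, let ε > 0, β ≥ (2+ε)α, and let ℓ = ℓ_β be the natural β-partition. For any x > 1, the set of vertices v that fail to satisfy both |D(ℓ, v)| ≤ x² and ℓ(v) ≤ log_{β+1} x has size at most |V| · 2^{1 − log x / log_{β/(2α)}(β+1)}. -/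
open Classical

variable {V : Type*}

/-! ### Auxiliary lemmas -/

section Aux

open Finset

lemma assigned_mono (G : SimpleGraph V) (S : Set V) (β : ℕ) {i j : ℕ} (h : i ≤ j) :
    assignedUpTo G S β i ⊆ assignedUpTo G S β j := by
  induction j with
  | zero => simp_all
  | succ k ih =>
    rcases Nat.eq_or_lt_of_le h with rfl | hlt
    · rfl
    · exact (ih (Nat.lt_succ_iff.mp hlt)).trans (Set.subset_union_left)

lemma mem_assigned_iff_sigma_le (G : SimpleGraph V) (S : Set V) (β : ℕ) (v : V) (i : ℕ) :
    v ∈ assignedUpTo G S β i ↔ indSigma G S β v ≤ (i : ℕ∞) := by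
  constructor
  · intro hv
    rw [indSigma, dif_pos ⟨i, hv⟩]
    exact_mod_cast Nat.cast_le.mpr (Nat.sInf_le hv)
  · intro hle
    rw [indSigma] at hle
    split at hle
    · next h =>
      have h1 : sInf {i | v ∈ assignedUpTo G S β i} ≤ i := by exact_mod_cast hle
      exact assigned_mono G S β h1 (Nat.sInf_mem h)
    · simp at hle

lemma up_nbrs_le [Fintype V] (G : SimpleGraph V) (S : Set V) (β : ℕ) (v : V) (j : ℕ)
    (hv : indSigma G S β v = (j : ℕ∞)) :
    {w | G.Adj v w ∧ (j : ℕ∞) ≤ indSigma G S β w}.ncard ≤ β := by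
  have hvj : v ∈ assignedUpTo G S β j := (mem_assigned_iff_sigma_le G S β v j).mpr hv.le
  cases j with
  | zero =>
    refine le_trans (Set.ncard_le_ncard (fun w hw => hw.1) (Set.toFinite _)) hvj.2
  | succ k =>
    have hvk : v ∉ assignedUpTo G S β k := by
      intro hmem
      have := (mem_assigned_iff_sigma_le G S β v k).mp hmem
      rw [hv] at this
      exact absurd (Nat.cast_le.mp this) (by omega)
    have hv2 : ((G.neighborSet v) \ assignedUpTo G S β k).ncard ≤ β := by
      rcases hvj with h | h
      · exact absurd h hvk
      · exact h.2
    refine le_trans (Set.ncard_le_ncard ?_ (Set.toFinite _)) hv2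
    rintro w ⟨hadj, hge⟩
    refine ⟨hadj, fun hmem => ?_⟩
    have := (mem_assigned_iff_sigma_le G S β w k).mp hmem
    have : ((k+1 : ℕ) : ℕ∞) ≤ (k : ℕ∞) := le_trans hge this
    exact absurd (Nat.cast_le.mp this) (by omega)

lemma arbor_count [Fintype V] (G : SimpleGraph V) (α β : ℕ) (hG : HasArboricity G α)
    (U : Set V) :
    β * {v | v ∈ U ∧ β < (G.neighborSet v ∩ U).ncard}.ncard ≤ 2 * α * U.ncard := by
  classical
  by_cases hU2 : 2 ≤ U.ncard
  swap
  · have : {v | v ∈ U ∧ β < (G.neighborSet v ∩ U).ncard} = ∅ := by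
      ext v
      simp only [Set.mem_setOf_eq, Set.mem_empty_iff_false, iff_false, not_and, not_lt]
      intro hvU
      by_contra hlt
      push_neg at hlt
      have hpos : 0 < (G.neighborSet v ∩ U).ncard := lt_of_le_of_lt (Nat.zero_le _) hlt
      obtain ⟨w, hw⟩ := Set.nonempty_of_ncard_ne_zero hpos.ne'
      have hwv : w ≠ v := fun h => G.irrefl (h ▸ hw.1)
      have : 2 ≤ U.ncard := by
        have h2 : ({w, v} : Set V).ncard ≤ U.ncard :=
          Set.ncard_le_ncard (by rintro z (rfl | rfl); exacts [hw.2, hvU]) (Set.toFinite _)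
        rwa [Set.ncard_pair hwv] at h2
      exact hU2 this
    simp [this]
  set H : G.Subgraph := (⊤ : G.Subgraph).induce U with hH
  have hverts : H.verts = U := rfl
  have hnbr : ∀ v ∈ U, H.neighborSet v = G.neighborSet v ∩ U := by
    intro v hv
    ext w
    simp [hH, SimpleGraph.Subgraph.induce_adj, hv, SimpleGraph.neighborSet, and_comm]
  haveI : Fintype H.verts := Fintype.ofFinite _
  have hand : ∑ a : H.verts, H.coe.degree a = 2 * H.coe.edgeFinset.card := by
    have h := SimpleGraph.sum_degrees_eq_twice_card_edges H.coe
    convert h using 2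
    congr!
  have hedge : H.coe.edgeFinset.card = H.edgeSet.ncard := by
    have h1 : H.coe.edgeSet.ncard = H.edgeSet.ncard := by
      rw [← H.image_coe_edgeSet_coe,
        Set.ncard_image_of_injective _ (Sym2.map.injective Subtype.val_injective)]
    rw [← h1, ← SimpleGraph.coe_edgeFinset, Set.ncard_coe_finset]
  have hE : H.edgeSet.ncard ≤ α * (U.ncard - 1) := hG H (by rwa [hverts])
  set B : Set V := {v | v ∈ U ∧ β < (G.neighborSet v ∩ U).ncard} with hB
  have hBsub : B ⊆ U := fun v hv => hv.1
  set BF : Finset H.verts := Finset.univ.filter (fun a => (a : V) ∈ B) with hBF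
  have hcard : BF.card = B.ncard := by
    rw [← Set.ncard_coe_finset]
    have : ((BF : Finset H.verts) : Set H.verts) = Subtype.val ⁻¹' B := by
      ext a; simp [hBF]
    rw [this, ← Set.ncard_image_of_injective _ Subtype.val_injective]
    congr 1
    rw [Set.image_preimage_eq_iff.mpr]
    rw [Subtype.range_coe_subtype]
    exact fun v hv => hBsub hv
  have hdegB : ∀ a ∈ BF, β + 1 ≤ H.coe.degree a := by
    intro a ha
    have haB : (a : V) ∈ B := by simpa [hBF] using ha
    have h1 : H.coe.degree a = H.degree a := H.coe_degree a
    have h2 : H.degree a = (H.neighborSet a).ncard := by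
      rw [← SimpleGraph.Subgraph.finset_card_neighborSet_eq_degree,
        Set.ncard_eq_toFinset_card']
    rw [h1, h2, hnbr a (hBsub haB)]
    exact haB.2
  have hsum : (β + 1) * BF.card ≤ ∑ a : H.verts, H.coe.degree a := by
    calc (β + 1) * BF.card = ∑ _a ∈ BF, (β + 1) := by rw [Finset.sum_const]; ring
    _ ≤ ∑ a ∈ BF, H.coe.degree a := Finset.sum_le_sum hdegB
    _ ≤ ∑ a : H.verts, H.coe.degree a := Finset.sum_le_sum_of_subset (Finset.subset_univ _)
  have : (β + 1) * B.ncard ≤ 2 * (α * (U.ncard - 1)) := by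
    rw [← hcard]
    exact hsum.trans (by rw [hand, hedge]; exact Nat.mul_le_mul_left 2 hE)
  calc β * B.ncard ≤ (β + 1) * B.ncard := Nat.mul_le_mul_right _ (by omega)
    _ ≤ 2 * (α * (U.ncard - 1)) := this
    _ ≤ 2 * α * U.ncard := by
        rw [mul_assoc]
        exact Nat.mul_le_mul_left 2 (Nat.mul_le_mul_left α (Nat.sub_le _ _))

lemma unassigned_decay [Fintype V] (G : SimpleGraph V) (α β : ℕ)
    (key : ∀ U : Set V, β * {v | v ∈ U ∧ β < (G.neighborSet v ∩ U).ncard}.ncard ≤ 2 * α * U.ncard)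
    (hβ : 0 < β) (i : ℕ) :
    ((((assignedUpTo G Set.univ β i)ᶜ : Set V).ncard : ℝ)) ≤
      (Fintype.card V : ℝ) * ((2 * α : ℝ) / β) ^ (i + 1) := by
  have hb0 : (0:ℝ) < (β:ℝ) := by exact_mod_cast hβ
  have step : ∀ (j : ℕ) (W : Set V), (assignedUpTo G Set.univ β (j+1))ᶜ ⊆
      {v | v ∈ (assignedUpTo G Set.univ β j)ᶜ ∧
        β < (G.neighborSet v ∩ (assignedUpTo G Set.univ β j)ᶜ).ncard} := by
    intro j _W v hv
    rw [Set.mem_compl_iff, assignedUpTo, Set.mem_union] at hv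
    push_neg at hv
    obtain ⟨h1, h2⟩ := hv
    simp only [Set.mem_setOf_eq, Set.mem_univ, true_and, not_le] at h2
    refine ⟨h1, ?_⟩
    rwa [Set.diff_eq] at h2
  have base : ((((assignedUpTo G Set.univ β 0)ᶜ : Set V).ncard : ℝ)) ≤
      (Fintype.card V : ℝ) * ((2 * α : ℝ) / β) := by
    have hsub : (assignedUpTo G Set.univ β 0)ᶜ ⊆
        {v | v ∈ (Set.univ : Set V) ∧ β < (G.neighborSet v ∩ Set.univ).ncard} := by
      intro v hv
      rw [Set.mem_compl_iff, assignedUpTo] at hv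
      simp only [Set.mem_setOf_eq, Set.mem_univ, true_and, not_and, not_le] at hv ⊢
      simpa [Set.inter_univ] using hv
    have h1 := key Set.univ
    have h2 : (assignedUpTo G Set.univ β 0)ᶜ.ncard ≤
        {v | v ∈ (Set.univ : Set V) ∧ β < (G.neighborSet v ∩ Set.univ).ncard}.ncard :=
      Set.ncard_le_ncard hsub (Set.toFinite _)
    have h3 : (β:ℝ) * ((assignedUpTo G Set.univ β 0)ᶜ.ncard : ℝ) ≤ 2 * α * Fintype.card V := by
      have := le_trans (Nat.mul_le_mul_left β h2) h1
      calc (β:ℝ) * ((assignedUpTo G Set.univ β 0)ᶜ.ncard : ℝ)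
          ≤ ((2 * α * Set.univ.ncard : ℕ) : ℝ) := by exact_mod_cast this
        _ = 2 * α * Fintype.card V := by rw [Set.ncard_univ, Nat.card_eq_fintype_card]; push_cast; ring
    rw [div_eq_mul_inv, ← mul_assoc]
    rw [mul_comm ((β:ℝ)) _, ← le_div_iff₀ hb0] at h3
    calc ((assignedUpTo G Set.univ β 0)ᶜ.ncard : ℝ) ≤ 2 * α * Fintype.card V / β := h3
      _ = Fintype.card V * (2 * α) * (β:ℝ)⁻¹ := by ring
  induction i with
  | zero => simpa [pow_one] using base
  | succ j ih =>
    have hsub := step j Set.univ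
    have h2 : (assignedUpTo G Set.univ β (j+1))ᶜ.ncard ≤
        {v | v ∈ (assignedUpTo G Set.univ β j)ᶜ ∧
          β < (G.neighborSet v ∩ (assignedUpTo G Set.univ β j)ᶜ).ncard}.ncard :=
      Set.ncard_le_ncard hsub (Set.toFinite _)
    have h1 := key ((assignedUpTo G Set.univ β j)ᶜ)
    have h3 : (β:ℝ) * ((assignedUpTo G Set.univ β (j+1))ᶜ.ncard : ℝ) ≤
        2 * α * ((assignedUpTo G Set.univ β j)ᶜ.ncard : ℝ) := by
      have := le_trans (Nat.mul_le_mul_left β h2) h1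
      exact_mod_cast this
    have h4 : ((assignedUpTo G Set.univ β (j+1))ᶜ.ncard : ℝ) ≤
        (2 * α / β : ℝ) * ((assignedUpTo G Set.univ β j)ᶜ.ncard : ℝ) := by
      rw [← le_div_iff₀' hb0] at h3
      calc ((assignedUpTo G Set.univ β (j+1))ᶜ.ncard : ℝ)
          ≤ 2 * α * ((assignedUpTo G Set.univ β j)ᶜ.ncard : ℝ) / β := h3
        _ = (2 * α / β : ℝ) * ((assignedUpTo G Set.univ β j)ᶜ.ncard : ℝ) := by ring
    calc ((assignedUpTo G Set.univ β (j+1))ᶜ.ncard : ℝ)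
        ≤ (2 * α / β : ℝ) * ((assignedUpTo G Set.univ β j)ᶜ.ncard : ℝ) := h4
      _ ≤ (2 * α / β : ℝ) * ((Fintype.card V : ℝ) * ((2 * α : ℝ) / β) ^ (j + 1)) := by
          apply mul_le_mul_of_nonneg_left ih
          positivity
      _ = (Fintype.card V : ℝ) * ((2 * α : ℝ) / β) ^ (j + 2) := by ring

lemma depAux_stable (G : SimpleGraph V) (σ : V → ℕ∞) (v : V) (m : ℕ)
    (h : (σ v).toNat ≤ m) : depAux G σ m v = depAux G σ (σ v).toNat v := by
  induction m with
  | zero =>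
    have : (σ v).toNat = 0 := Nat.le_zero.mp h
    rw [this]
  | succ k ih =>
    rcases Nat.eq_or_lt_of_le h with heq | hlt
    · rw [← heq]
    · have hk : (σ v).toNat ≤ k := by omega
      have hne : σ v ≠ ((k+1 : ℕ) : ℕ∞) := by
        intro hc
        have : (σ v).toNat = k + 1 := by rw [hc]; exact ENat.toNat_coe _
        omega
      rw [depAux, if_neg hne]
      exact ih hk

lemma depGraph_zero (G : SimpleGraph V) (σ : V → ℕ∞) (v : V) (h : σ v = 0) :
    depGraph G σ v = {v} := by
  rw [depGraph, h]
  simp only [ENat.toNat_zero]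
  rw [depAux, if_pos h]

lemma depGraph_succ (G : SimpleGraph V) (σ : V → ℕ∞) (v : V) (i : ℕ)
    (h : σ v = ((i+1 : ℕ) : ℕ∞)) :
    depGraph G σ v = insert v (⋃ w ∈ {w | G.Adj v w ∧ σ w < σ v}, depGraph G σ w) := by
  have ht : (σ v).toNat = i + 1 := by rw [h]; exact ENat.toNat_coe _
  rw [depGraph, ht, depAux, if_pos h]
  congr 1
  apply Set.iUnion_congr
  intro w
  apply Set.iUnion_congr
  intro hw
  have hlt : σ w < ((i+1 : ℕ) : ℕ∞) := h ▸ hw.2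
  have hne : σ w ≠ ⊤ := fun hc => by rw [hc] at hlt; exact absurd hlt (by simp)
  have : (σ w).toNat ≤ i := by
    have := ENat.coe_toNat hne
    rw [← this] at hlt
    exact_mod_cast Nat.lt_succ_iff.mp (by exact_mod_cast hlt)
  rw [depAux_stable G σ w i this, depGraph]

lemma ncard_biUnion_le {W α : Type*} (s : Finset W) (f : W → Set α) :
    (⋃ w ∈ s, f w).ncard ≤ ∑ w ∈ s, (f w).ncard := by
  induction s using Finset.induction with
  | empty => simp
  | insert a s' hx ih =>
    rw [Finset.set_biUnion_insert, Finset.sum_insert hx]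
    exact le_trans (Set.ncard_union_le _ _) (Nat.add_le_add_left ih _)

lemma enat_le_succ_iff (m : ℕ∞) (i : ℕ) :
    m ≤ ((i+1 : ℕ) : ℕ∞) ↔ m ≤ (i : ℕ∞) ∨ m = ((i+1 : ℕ) : ℕ∞) := by
  induction m using ENat.recTopCoe with
  | top => simp [eq_comm]
  | coe j =>
    constructor
    · intro h
      have : j ≤ i + 1 := by exact_mod_cast h
      rcases Nat.lt_or_ge j (i+1) with h1 | h1
      · exact Or.inl (by exact_mod_cast Nat.lt_succ_iff.mp h1)
      · exact Or.inr (by exact_mod_cast Nat.le_antisymm this h1)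
    · rintro (h | h)
      · exact le_trans h (by exact_mod_cast Nat.le_succ i)
      · exact le_of_eq h

lemma enat_lt_succ_iff (m : ℕ∞) (i : ℕ) :
    m < ((i+1 : ℕ) : ℕ∞) ↔ m ≤ (i : ℕ∞) := by
  induction m using ENat.recTopCoe with
  | top => simp [lt_irrefl]
  | coe j =>
    rw [Nat.cast_lt, Nat.cast_le]
    omega

lemma d_succ_le [Fintype V] (G : SimpleGraph V) (σ : V → ℕ∞) (v : V) (i : ℕ)
    (h : σ v = ((i+1 : ℕ) : ℕ∞)) :
    (depGraph G σ v).ncard ≤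
      1 + ∑ w ∈ univ.filter (fun w => G.Adj v w ∧ σ w < σ v), (depGraph G σ w).ncard := by
  rw [depGraph_succ G σ v i h]
  refine le_trans (Set.ncard_insert_le _ _) ?_
  rw [Nat.add_comm]
  apply Nat.add_le_add_left
  have hset : {w | G.Adj v w ∧ σ w < σ v} =
      ↑(univ.filter (fun w => G.Adj v w ∧ σ w < σ v)) := by
    ext w; simp
  rw [hset, Finset.set_biUnion_coe]
  exact ncard_biUnion_le _ _

lemma sumF [Fintype V] (G : SimpleGraph V) (σ : V → ℕ∞) (β : ℕ)
    (hup : ∀ (v : V) (j : ℕ), σ v = (j : ℕ∞) → {w | G.Adj v w ∧ (j : ℕ∞) ≤ σ w}.ncard ≤ β) (i : ℕ) :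
    ∑ v ∈ univ.filter (fun v => σ v ≤ (i : ℕ∞)), (depGraph G σ v).ncard ≤
      Fintype.card V * ∑ k ∈ range (i+1), (β+1)^k := by
  induction i with
  | zero =>
    have h0 : univ.filter (fun v : V => σ v ≤ ((0:ℕ) : ℕ∞)) =
        univ.filter (fun v : V => σ v = 0) := by
      apply Finset.filter_congr
      intro v _
      simp only [Nat.cast_zero, nonpos_iff_eq_zero]
    rw [h0]
    have : ∀ v ∈ univ.filter (fun v : V => σ v = 0), (depGraph G σ v).ncard = 1 := by
      intro v hv
      rw [depGraph_zero G σ v (by simpa using hv)]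
      exact Set.ncard_singleton v
    rw [Finset.sum_congr rfl this, Finset.sum_const, smul_eq_mul, mul_one]
    simp only [zero_add, range_one, sum_singleton, pow_zero, mul_one]
    exact le_trans (Finset.card_filter_le _ _) (le_of_eq (Finset.card_univ))
  | succ i ih =>
    set n := Fintype.card V
    set d := fun v => (depGraph G σ v).ncard with hd
    set leF := univ.filter (fun v : V => σ v ≤ (i : ℕ∞)) with hleF
    set layerF := univ.filter (fun v : V => σ v = ((i+1:ℕ) : ℕ∞)) with hlayerF
    have hsplit : univ.filter (fun v : V => σ v ≤ ((i+1:ℕ) : ℕ∞)) = leF ∪ layerF := by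
      rw [hleF, hlayerF, ← Finset.filter_or]
      apply Finset.filter_congr
      intro v _
      exact enat_le_succ_iff (σ v) i
    have hdisj : Disjoint leF layerF := by
      rw [Finset.disjoint_left]
      intro v hv1 hv2
      rw [hleF, Finset.mem_filter] at hv1
      rw [hlayerF, Finset.mem_filter] at hv2
      rw [hv2.2] at hv1
      have : i + 1 ≤ i := by exact_mod_cast hv1.2
      omega
    have hswapbound : ∑ v ∈ layerF, ∑ w ∈ univ.filter (fun w => G.Adj v w ∧ σ w < σ v), d w ≤
        β * ∑ w ∈ leF, d w := by
      have e1 : ∀ v : V, ∑ w ∈ univ.filter (fun w => G.Adj v w ∧ σ w < σ v), d w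
          = ∑ w ∈ univ, if G.Adj v w ∧ σ w < σ v then d w else 0 :=
        fun v => Finset.sum_filter _ _
      calc ∑ v ∈ layerF, ∑ w ∈ univ.filter (fun w => G.Adj v w ∧ σ w < σ v), d w
          = ∑ v ∈ layerF, ∑ w ∈ univ, if G.Adj v w ∧ σ w < σ v then d w else 0 :=
            Finset.sum_congr rfl (fun v _ => e1 v)
        _ = ∑ w ∈ univ, ∑ v ∈ layerF, if G.Adj v w ∧ σ w < σ v then d w else 0 :=
            Finset.sum_comm
        _ = ∑ w ∈ univ, (layerF.filter (fun v => G.Adj v w ∧ σ w < σ v)).card * d w := by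
            apply Finset.sum_congr rfl
            intro w _
            rw [← Finset.sum_filter, Finset.sum_const, smul_eq_mul]
        _ ≤ ∑ w ∈ univ, (if σ w ≤ (i : ℕ∞) then β * d w else 0) := by
            apply Finset.sum_le_sum
            intro w _
            by_cases hw : σ w ≤ (i : ℕ∞)
            · rw [if_pos hw]
              apply Nat.mul_le_mul_right
              have hne : σ w ≠ ⊤ := by
                intro hc; rw [hc] at hw; exact absurd hw (by simp)
              have hwj : σ w = (((σ w).toNat : ℕ) : ℕ∞) := (ENat.coe_toNat hne).symm
              have hβ := hup w (σ w).toNat hwj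
              have hsub : ↑(layerF.filter (fun v => G.Adj v w ∧ σ w < σ v)) ⊆
                  {u | G.Adj w u ∧ (((σ w).toNat : ℕ) : ℕ∞) ≤ σ u} := by
                intro v hv
                rw [Finset.mem_coe, Finset.mem_filter] at hv
                exact ⟨hv.2.1.symm, hwj ▸ hv.2.2.le⟩
              calc (layerF.filter (fun v => G.Adj v w ∧ σ w < σ v)).card
                  = (↑(layerF.filter (fun v => G.Adj v w ∧ σ w < σ v)) : Set V).ncard :=
                    (Set.ncard_coe_finset _).symm
                _ ≤ {u | G.Adj w u ∧ (((σ w).toNat : ℕ) : ℕ∞) ≤ σ u}.ncard :=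
                    Set.ncard_le_ncard hsub (Set.toFinite _)
                _ ≤ β := hβ
            · rw [if_neg hw]
              have : layerF.filter (fun v => G.Adj v w ∧ σ w < σ v) = ∅ := by
                rw [Finset.filter_eq_empty_iff]
                intro v hv
                rw [hlayerF, Finset.mem_filter] at hv
                rintro ⟨-, hlt⟩
                rw [hv.2] at hlt
                exact hw ((enat_lt_succ_iff (σ w) i).mp hlt)
              rw [this]
              simp
        _ = β * ∑ w ∈ leF, d w := by
            rw [← Finset.sum_filter, ← hleF, Finset.mul_sum]
    have hlay : ∑ v ∈ layerF, d v ≤ layerF.card + β * ∑ w ∈ leF, d w := by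
      have h1 : ∀ v ∈ layerF, d v ≤
          1 + ∑ w ∈ univ.filter (fun w => G.Adj v w ∧ σ w < σ v), d w := by
        intro v hv
        rw [hlayerF, Finset.mem_filter] at hv
        exact d_succ_le G σ v i hv.2
      calc ∑ v ∈ layerF, d v
          ≤ ∑ v ∈ layerF, (1 + ∑ w ∈ univ.filter (fun w => G.Adj v w ∧ σ w < σ v), d w) :=
            Finset.sum_le_sum h1
        _ = layerF.card + ∑ v ∈ layerF, ∑ w ∈ univ.filter (fun w => G.Adj v w ∧ σ w < σ v), d w := by
            rw [Finset.sum_add_distrib, Finset.sum_const, smul_eq_mul, mul_one]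
        _ ≤ layerF.card + β * ∑ w ∈ leF, d w := Nat.add_le_add_left hswapbound _
    have hcard : layerF.card ≤ n := le_trans (Finset.card_filter_le _ _) (le_of_eq Finset.card_univ)
    rw [hsplit, Finset.sum_union hdisj]
    calc ∑ v ∈ leF, d v + ∑ v ∈ layerF, d v
        ≤ ∑ v ∈ leF, d v + (layerF.card + β * ∑ w ∈ leF, d w) := Nat.add_le_add_left hlay _
      _ = layerF.card + (β + 1) * ∑ v ∈ leF, d v := by ring
      _ ≤ n + (β + 1) * (n * ∑ k ∈ range (i+1), (β+1)^k) :=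
          Nat.add_le_add hcard (Nat.mul_le_mul_left _ ih)
      _ = n * ((β+1) * ∑ k ∈ range (i+1), (β+1)^k + 1) := by ring
      _ = n * ∑ k ∈ range (i+1+1), (β+1)^k := by
          congr 1
          conv_rhs => rw [geom_sum_succ]

end Aux

set_option maxHeartbeats 1000000 in
/-- The set of vertices `v` failing both `|D(ℓ,v)| ≤ x²` and
`ℓ(v) ≤ log_{β+1} x` has size at most `|V| · 2^{1 - log x / log_{β/(2α)}(β+1)}`. -/
theorem few_bad_vertices [Fintype V] (G : SimpleGraph V) (α β : ℕ) (ε x : ℝ)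
    (hε : 0 < ε) (hβ : (2 + ε) * α ≤ (β : ℝ)) (hG : HasArboricity G α)
    (hx : 1 < x) :
    ({v : V | ¬ (((depGraph G (indSigma G Set.univ β) v).ncard : ℝ) ≤ x ^ 2 ∧
        indSigma G Set.univ β v ≠ ⊤ ∧
        (((indSigma G Set.univ β v).toNat : ℝ) ≤ Real.log x / Real.log ((β : ℝ) + 1)))}.ncard : ℝ)
      ≤ (Fintype.card V) *
          (2 : ℝ) ^ (1 - Real.log x / Real.logb ((β : ℝ) / (2 * α)) ((β : ℝ) + 1)) := by
  classical
  set σ := indSigma G Set.univ β with hσdef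
  set n := Fintype.card V with hndef
  have hn0 : (0:ℝ) ≤ (n:ℝ) := Nat.cast_nonneg n
  have hlogx : 0 < Real.log x := Real.log_pos hx
  have hβ1log : (0:ℝ) ≤ Real.log ((β:ℝ)+1) :=
    Real.log_nonneg (le_add_of_nonneg_left (Nat.cast_nonneg β))
  set L : ℝ := Real.log x / Real.log ((β:ℝ)+1) with hLdef
  have hL0 : 0 ≤ L := div_nonneg hlogx.le hβ1log
  set i₀ := Nat.floor L with hi₀def
  set B1 : Set V := (assignedUpTo G Set.univ β i₀)ᶜ with hB1def
  set B2 : Set V := {v | σ v ≤ (i₀:ℕ∞) ∧ x^2 < ((depGraph G σ v).ncard : ℝ)} with hB2def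
  set Bad : Set V := {v : V | ¬ (((depGraph G σ v).ncard : ℝ) ≤ x ^ 2 ∧
      σ v ≠ ⊤ ∧ (((σ v).toNat : ℝ) ≤ L))} with hBaddef
  have htriv : (Bad.ncard : ℝ) ≤ (n:ℝ) := by
    have h := Set.ncard_le_ncard (Set.subset_univ Bad) (Set.toFinite _)
    rw [Set.ncard_univ, Nat.card_eq_fintype_card] at h
    exact_mod_cast h
  have hBsub : Bad ⊆ B1 ∪ B2 := by
    intro v hv
    rw [hBaddef, Set.mem_setOf_eq] at hv
    by_cases h1 : v ∈ assignedUpTo G Set.univ β i₀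
    · right
      have hle : σ v ≤ (i₀:ℕ∞) := (mem_assigned_iff_sigma_le G Set.univ β v i₀).mp h1
      have hne : σ v ≠ ⊤ := by
        intro hc; rw [hc] at hle; exact absurd hle (by simp)
      have htn : ((σ v).toNat : ℝ) ≤ L := by
        have h2 : (σ v).toNat ≤ i₀ := by
          rw [← ENat.coe_toNat hne] at hle
          exact_mod_cast hle
        calc ((σ v).toNat : ℝ) ≤ (i₀ : ℝ) := Nat.cast_le.mpr h2
          _ ≤ L := Nat.floor_le hL0
      have hA : ¬ (((depGraph G σ v).ncard : ℝ) ≤ x^2) := fun hA => hv ⟨hA, hne, htn⟩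
      exact ⟨hle, lt_of_not_ge hA⟩
    · left; exact h1
  have hBcard : (Bad.ncard : ℝ) ≤ (B1.ncard : ℝ) + (B2.ncard : ℝ) := by
    have h1 : Bad.ncard ≤ (B1 ∪ B2).ncard := Set.ncard_le_ncard hBsub (Set.toFinite _)
    have h2 := Set.ncard_union_le B1 B2
    exact_mod_cast le_trans h1 h2
  by_cases hα0 : α = 0
  · subst hα0
    have hR : (2:ℝ) ^ (1 - Real.log x /
        Real.logb ((β : ℝ) / (2 * ((0:ℕ):ℝ))) ((β : ℝ) + 1)) = 2 := by
      norm_num [Real.logb_zero_left, Real.rpow_one]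
    rw [hR]
    calc (Bad.ncard : ℝ) ≤ (n:ℝ) := htriv
      _ ≤ (n:ℝ) * 2 := by linarith
  -- now α ≥ 1
  have hα1 : 1 ≤ α := Nat.pos_of_ne_zero hα0
  have hαR : (1:ℝ) ≤ (α:ℝ) := by exact_mod_cast hα1
  have hβR : (2:ℝ) * α < (β:ℝ) := lt_of_lt_of_le (by nlinarith) hβ
  have hβ3 : (3:ℝ) ≤ (β:ℝ) := by
    have h2 : (2:ℝ) < (β:ℝ) := by nlinarith
    have h2' : 2 < β := by exact_mod_cast h2
    have : 3 ≤ β := h2'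
    exact_mod_cast this
  have hβpos : 0 < β := by
    have : (0:ℝ) < (β:ℝ) := by linarith
    exact_mod_cast this
  set b : ℝ := (β:ℝ) / (2 * α) with hbdef
  have hb1 : 1 < b := (one_lt_div (by positivity)).mpr hβR
  have hbpos : (0:ℝ) < b := lt_trans one_pos hb1
  have hlogb : 0 < Real.log b := Real.log_pos hb1
  have hlogβ1 : 0 < Real.log ((β:ℝ)+1) := Real.log_pos (by linarith)
  set y : ℝ := Real.log x * Real.log b / Real.log ((β:ℝ)+1) with hydef
  have hy0 : 0 ≤ y := by positivity
  have hbβ1 : b ≤ (β:ℝ)+1 := by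
    rw [hbdef, div_le_iff₀ (by positivity)]
    nlinarith
  have hyLx : y ≤ Real.log x := by
    rw [hydef, div_le_iff₀ hlogβ1]
    have h1 : Real.log b ≤ Real.log ((β:ℝ)+1) := Real.log_le_log hbpos hbβ1
    nlinarith
  have hyeq : y = L * Real.log b := by
    rw [hydef, hLdef, div_mul_eq_mul_div]
  have hexp : Real.log x / Real.logb b ((β : ℝ) + 1) = y := by
    rw [Real.logb, div_div_eq_mul_div, hydef]
  have h2y : (2:ℝ) ^ ((1:ℝ) - y) = 2 * (2:ℝ) ^ (-y) := by
    rw [show (1:ℝ) - y = 1 + (-y) by ring, Real.rpow_add (by norm_num), Real.rpow_one]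
  have hexp2y : (2:ℝ)^(-y) = Real.exp (Real.log 2 * (-y)) := by
    rw [Real.rpow_def_of_pos (by norm_num)]
  have hlog2 : Real.log 2 ≤ 1 := by
    have := Real.log_le_sub_one_of_pos (by norm_num : (0:ℝ) < 2)
    linarith
  have hlog2' : 0 ≤ Real.log 2 := Real.log_nonneg (by norm_num)
  rw [hexp]
  by_cases hxe : x ≤ Real.exp 1
  · -- trivial case
    have hy1 : y ≤ 1 := by
      refine hyLx.trans ?_
      have h := Real.log_le_log (by linarith : (0:ℝ) < x) hxe
      rwa [Real.log_exp] at h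
    have h2ge : (1:ℝ) ≤ (2:ℝ)^((1:ℝ)-y) := by
      simpa [Real.rpow_zero] using
        Real.rpow_le_rpow_of_exponent_le (by norm_num : (1:ℝ) ≤ 2)
          (show (0:ℝ) ≤ 1-y by linarith)
    calc (Bad.ncard : ℝ) ≤ (n:ℝ) := htriv
      _ = (n:ℝ) * 1 := (mul_one _).symm
      _ ≤ (n:ℝ) * (2:ℝ)^((1:ℝ)-y) := mul_le_mul_of_nonneg_left h2ge hn0
  · have hlogx1 : 1 < Real.log x := by
      have h := Real.log_lt_log (Real.exp_pos 1) (lt_of_not_ge hxe)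
      rwa [Real.log_exp] at h
    -- Piece 1
    have hpiece1 : (B1.ncard : ℝ) ≤ (n:ℝ) * (2:ℝ)^(-y) := by
      have hdecay := unassigned_decay G α β (fun U => arbor_count G α β hG U) hβpos i₀
      have hc : (2 * (α:ℝ)) / β = b⁻¹ := by rw [hbdef, inv_div]
      have hstep : ((2 * (α:ℝ)) / β) ^ (i₀ + 1) ≤ (2:ℝ)^(-y) := by
        rw [hc]
        have hbinv : b⁻¹ = Real.exp (-Real.log b) := by
          rw [Real.exp_neg, Real.exp_log hbpos]
        have h1 : (b⁻¹) ^ (i₀+1) = Real.exp (-((((i₀:ℝ)+1)) * Real.log b)) := by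
          rw [hbinv, ← Real.exp_nat_mul]
          congr 1
          push_cast
          ring
        have hLle : L ≤ (i₀:ℝ)+1 := (Nat.lt_floor_add_one L).le
        have hy1 : y ≤ ((i₀:ℝ)+1) * Real.log b := by
          rw [hyeq]
          exact mul_le_mul_of_nonneg_right hLle hlogb.le
        have hmul : Real.log 2 * y ≤ y := by
          calc Real.log 2 * y ≤ 1 * y := mul_le_mul_of_nonneg_right hlog2 hy0
            _ = y := one_mul y
        have h2 : -((((i₀:ℝ)+1)) * Real.log b) ≤ Real.log 2 * (-y) := by
          have e : Real.log 2 * (-y) = -(Real.log 2 * y) := by ring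
          rw [e, neg_le_neg_iff]
          exact hmul.trans hy1
        rw [h1, hexp2y]
        exact Real.exp_le_exp.mpr h2
      calc (B1.ncard : ℝ) ≤ (n:ℝ) * ((2 * (α:ℝ)) / β) ^ (i₀ + 1) := hdecay
        _ ≤ (n:ℝ) * (2:ℝ)^(-y) := mul_le_mul_of_nonneg_left hstep hn0
    -- Piece 2
    have hupσ : ∀ (v : V) (j : ℕ), σ v = (j:ℕ∞) →
        {w | G.Adj v w ∧ (j:ℕ∞) ≤ σ w}.ncard ≤ β :=
      fun v j hj => up_nbrs_le G Set.univ β v j hj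
    have hF := sumF G σ β hupσ i₀
    set leF := Finset.univ.filter (fun v : V => σ v ≤ (i₀ : ℕ∞)) with hleFdef
    set B2F := Finset.univ.filter
      (fun v : V => σ v ≤ (i₀:ℕ∞) ∧ x^2 < ((depGraph G σ v).ncard : ℝ)) with hB2Fdef
    have hB2coe : B2 = ↑B2F := by ext v; simp [hB2def, hB2Fdef]
    have hB2card : (B2.ncard : ℝ) = (B2F.card : ℝ) := by rw [hB2coe, Set.ncard_coe_finset]
    have hx2 : (0:ℝ) < x^2 := by positivity
    have hmarkov : (B2F.card : ℝ) * x^2 ≤ ∑ v ∈ leF, ((depGraph G σ v).ncard : ℝ) := by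
      calc (B2F.card : ℝ) * x^2 = ∑ _v ∈ B2F, x^2 := by rw [Finset.sum_const, nsmul_eq_mul]
        _ ≤ ∑ v ∈ B2F, ((depGraph G σ v).ncard : ℝ) := by
            apply Finset.sum_le_sum
            intro v hv
            rw [hB2Fdef, Finset.mem_filter] at hv
            exact hv.2.2.le
        _ ≤ ∑ v ∈ leF, ((depGraph G σ v).ncard : ℝ) := by
            apply Finset.sum_le_sum_of_subset_of_nonneg
            · intro v hv
              rw [hB2Fdef, Finset.mem_filter] at hv
              rw [hleFdef, Finset.mem_filter]
              exact ⟨hv.1, hv.2.1⟩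
            · intro v _ _
              positivity
    have hFcast : (∑ v ∈ leF, ((depGraph G σ v).ncard : ℝ)) ≤
        (n:ℝ) * ∑ k ∈ Finset.range (i₀+1), ((β:ℝ)+1)^k := by
      calc ∑ v ∈ leF, ((depGraph G σ v).ncard : ℝ)
          = ((∑ v ∈ leF, (depGraph G σ v).ncard : ℕ) : ℝ) := (Nat.cast_sum _ _).symm
        _ ≤ ((n * ∑ k ∈ Finset.range (i₀+1), (β+1)^k : ℕ) : ℝ) := Nat.cast_le.mpr hF
        _ = (n:ℝ) * ∑ k ∈ Finset.range (i₀+1), ((β:ℝ)+1)^k := by push_cast; ring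
    have hgeom : ∑ k ∈ Finset.range (i₀+1), ((β:ℝ)+1)^k ≤ (4/3) * x := by
      have hβne1 : ((β:ℝ)+1) ≠ 1 := by linarith
      rw [geom_sum_eq hβne1]
      have hpow : ((β:ℝ)+1)^i₀ ≤ x := by
        have h1 : ((β:ℝ)+1)^i₀ = Real.exp ((i₀:ℝ) * Real.log ((β:ℝ)+1)) := by
          rw [Real.exp_nat_mul, Real.exp_log (by linarith : (0:ℝ) < (β:ℝ)+1)]
        rw [h1]
        have h2 : (i₀:ℝ) * Real.log ((β:ℝ)+1) ≤ Real.log x := by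
          have hfl : (i₀:ℝ) ≤ L := Nat.floor_le hL0
          calc (i₀:ℝ) * Real.log ((β:ℝ)+1) ≤ L * Real.log ((β:ℝ)+1) :=
              mul_le_mul_of_nonneg_right hfl hβ1log
            _ = Real.log x := by rw [hLdef]; field_simp
        calc Real.exp ((i₀:ℝ) * Real.log ((β:ℝ)+1)) ≤ Real.exp (Real.log x) :=
            Real.exp_le_exp.mpr h2
          _ = x := Real.exp_log (by linarith)
      have hd : ((β:ℝ)+1) - 1 = (β:ℝ) := by ring
      rw [hd, div_le_iff₀ (by linarith : (0:ℝ) < (β:ℝ))]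
      have hexpand : ((β:ℝ)+1)^(i₀+1) = ((β:ℝ)+1) * ((β:ℝ)+1)^i₀ := by
        rw [pow_succ]; ring
      have h43 : (β:ℝ)+1 ≤ (4/3) * β := by linarith
      have hppos : (0:ℝ) ≤ ((β:ℝ)+1)^i₀ := by positivity
      nlinarith [mul_le_mul_of_nonneg_left hpow (by linarith : (0:ℝ) ≤ (β:ℝ)+1),
        mul_le_mul_of_nonneg_right h43 (by linarith : (0:ℝ) ≤ x)]
    have hpiece2 : (B2.ncard : ℝ) ≤ (n:ℝ) * (2:ℝ)^(-y) := by
      rw [hB2card]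
      have h1 : (B2F.card : ℝ) ≤ (n:ℝ) * ((4/3) * x) / x^2 := by
        rw [le_div_iff₀ hx2]
        calc (B2F.card : ℝ) * x^2 ≤ ∑ v ∈ leF, ((depGraph G σ v).ncard : ℝ) := hmarkov
          _ ≤ (n:ℝ) * ∑ k ∈ Finset.range (i₀+1), ((β:ℝ)+1)^k := hFcast
          _ ≤ (n:ℝ) * ((4/3) * x) := mul_le_mul_of_nonneg_left hgeom hn0
      refine h1.trans ?_
      have hxpos : (0:ℝ) < x := by linarith
      have heq : (n:ℝ) * ((4/3) * x) / x^2 = (n:ℝ) * ((4/3) / x) := by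
        field_simp
      rw [heq]
      apply mul_le_mul_of_nonneg_left _ hn0
      rw [div_le_iff₀ hxpos, hexp2y]
      have hre : Real.exp (Real.log 2 * (-y)) * x = Real.exp (Real.log x - Real.log 2 * y) := by
        rw [← Real.exp_log hxpos, ← Real.exp_add]
        congr 1
        rw [Real.log_exp]
        ring
      rw [hre]
      have hlb : (1:ℝ) - Real.log 2 ≤ Real.log x - Real.log 2 * y := by
        have h1' : Real.log 2 * y ≤ Real.log 2 * Real.log x :=
          mul_le_mul_of_nonneg_left hyLx hlog2'
        nlinarith [mul_nonneg (by linarith : (0:ℝ) ≤ Real.log x - 1)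
          (by linarith : (0:ℝ) ≤ 1 - Real.log 2)]
      calc (4/3:ℝ) ≤ Real.exp 1 / 2 := by
            have := Real.exp_one_gt_d9
            linarith
        _ = Real.exp (1 - Real.log 2) := by
            rw [Real.exp_sub, Real.exp_log (by norm_num : (0:ℝ) < 2)]
        _ ≤ Real.exp (Real.log x - Real.log 2 * y) := Real.exp_le_exp.mpr hlb
    calc (Bad.ncard : ℝ) ≤ (B1.ncard : ℝ) + (B2.ncard : ℝ) := hBcard
      _ ≤ (n:ℝ) * (2:ℝ)^(-y) + (n:ℝ) * (2:ℝ)^(-y) := add_le_add hpiece1 hpiece2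
      _ = (n:ℝ) * (2 * (2:ℝ)^(-y)) := by ring
      _ = (n:ℝ) * (2:ℝ)^((1:ℝ)-y) := by rw [h2y]
end
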